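/- For every n ≥ 3, the 3-token graph Γ₃(P_n) of the path graph on n vertices is isomorphic to the cubical staircase graph CS_n. -/

import Mathlib

open SimpleGraph Finset

/-- The `k`-token graph of a graph `G`: vertices are `k`-element subsets of the vertex set,
two subsets adjacent iff their symmetric difference is `{x, y}` with `xy` an edge of `G`. -/
def tokenGraph {V : Type*} [DecidableEq V] (G : SimpleGraph V) (k : ℕ) :
    SimpleGraph {s : Finset V // s.card = k} where
  Adj A B := ∃ x y, G.Adj x y ∧ symmDiff A.1 B.1 = {x, y}
  symm := by
    refine ⟨?_⟩
    rintro A B ⟨x, y, hxy, h⟩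
    exact ⟨x, y, hxy, by rwa [symmDiff_comm]⟩
  loopless := by
    refine ⟨?_⟩
    rintro A ⟨x, y, hxy, h⟩
    rw [symmDiff_self] at h
    exact (Finset.insert_nonempty x {y}).ne_empty (by simpa using h.symm)

/-- Vertex set of the cubical staircase graph `CS n` (1-indexed coordinates). -/
abbrev CSVert (n : ℕ) :=
  {v : ℕ × ℕ × ℕ // 1 ≤ v.1 ∧ v.1 ≤ n - 2 ∧ 1 ≤ v.2.1 ∧ v.2.1 ≤ v.1 ∧
    1 ≤ v.2.2 ∧ v.2.2 ≤ n - 1 - v.1}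

/-- The cubical staircase graph `CS n`: two vertices are adjacent iff they differ in exactly
one coordinate, by exactly 1. -/
def CS (n : ℕ) : SimpleGraph (CSVert n) where
  Adj a b :=
    (a.1.1 = b.1.1 ∧ a.1.2.1 = b.1.2.1 ∧ (a.1.2.2 + 1 = b.1.2.2 ∨ b.1.2.2 + 1 = a.1.2.2)) ∨
    (a.1.1 = b.1.1 ∧ a.1.2.2 = b.1.2.2 ∧ (a.1.2.1 + 1 = b.1.2.1 ∨ b.1.2.1 + 1 = a.1.2.1)) ∨
    (a.1.2.1 = b.1.2.1 ∧ a.1.2.2 = b.1.2.2 ∧ (a.1.1 + 1 = b.1.1 ∨ b.1.1 + 1 = a.1.1))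
  symm := ⟨fun a b h => by omega⟩
  loopless := ⟨fun a h => by omega⟩

/-- Disjoint union of an arbitrary family of graphs. -/
def sigmaGraph {ι : Type*} {V : ι → Type*} (G : ∀ i, SimpleGraph (V i)) :
    SimpleGraph (Σ i, V i) where
  Adj a b := ∃ (i : ι) (x y : V i), (G i).Adj x y ∧ a = ⟨i, x⟩ ∧ b = ⟨i, y⟩
  symm := ⟨by rintro a b ⟨i, x, y, h, rfl, rfl⟩; exact ⟨i, y, x, h.symm, rfl, rfl⟩⟩
  loopless := by
    refine ⟨?_⟩
    rintro a ⟨i, x, y, h, rfl, he⟩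
    exact h.ne (by simpa using he)

/-! ### Auxiliary material for `stmt9` -/

section StaircaseAux

/-- The 3-subset of `Fin n` associated to a staircase vertex `(i, j, k)`,
namely `{j - 1, i, n - k}` (0-indexed). -/
def csSet (n : ℕ) (hn : 3 ≤ n) (v : CSVert n) : Finset (Fin n) :=
  {⟨v.1.2.1 - 1, by have h := v.2; omega⟩, ⟨v.1.1, by have h := v.2; omega⟩,
   ⟨n - v.1.2.2, by have h := v.2; omega⟩}

lemma mem_csSet (n : ℕ) (hn : 3 ≤ n) (v : CSVert n) (z : Fin n) :
    z ∈ csSet n hn v ↔ z.val = v.1.2.1 - 1 ∨ z.val = v.1.1 ∨ z.val = n - v.1.2.2 := by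
  simp [csSet, Fin.ext_iff]

lemma csSet_card (n : ℕ) (hn : 3 ≤ n) (v : CSVert n) : (csSet n hn v).card = 3 := by
  have h := v.2
  rw [csSet, Finset.card_insert_of_notMem, Finset.card_insert_of_notMem,
    Finset.card_singleton]
  · simp only [Finset.mem_singleton, Fin.mk.injEq]; omega
  · simp only [Finset.mem_insert, Finset.mem_singleton, Fin.mk.injEq]; omega

lemma csSet_inj (n : ℕ) (hn : 3 ≤ n) (v w : CSVert n)
    (hvw : csSet n hn v = csSet n hn w) : v = w := by
  rw [Finset.ext_iff] at hvw
  simp only [mem_csSet] at hvw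
  have hv := v.2; have hw := w.2
  have b1 : v.1.2.1 - 1 < n := by omega
  have b2 : v.1.1 < n := by omega
  have b3 : n - v.1.2.2 < n := by omega
  have h1 := (hvw ⟨_, b1⟩).mp (Or.inl rfl)
  have h2 := (hvw ⟨_, b2⟩).mp (Or.inr (Or.inl rfl))
  have h3 := (hvw ⟨_, b3⟩).mp (Or.inr (Or.inr rfl))
  simp only [Fin.val_mk] at h1 h2 h3
  apply Subtype.ext
  simp only [Prod.ext_iff]
  omega

lemma exists_sorted_triple {n : ℕ} {s : Finset (Fin n)} (h : s.card = 3) :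
    ∃ a b c : Fin n, a < b ∧ b < c ∧ s = {a, b, c} := by
  obtain ⟨a, b, c, hab, hac, hbc, rfl⟩ := Finset.card_eq_three.mp h
  rcases hab.lt_or_gt with h1 | h1 <;> rcases hac.lt_or_gt with h2 | h2 <;>
    rcases hbc.lt_or_gt with h3 | h3
  · exact ⟨a, b, c, h1, h3, rfl⟩
  · exact ⟨a, c, b, h2, h3, by ext t; simp [Finset.mem_insert]; tauto⟩
  · exact absurd (h2.trans (h1.trans h3)) (lt_irrefl c)
  · exact ⟨c, a, b, h2, h1, by ext t; simp [Finset.mem_insert]; tauto⟩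
  · exact ⟨b, a, c, h1, h2, by ext t; simp [Finset.mem_insert]; tauto⟩
  · exact absurd (h1.trans (h2.trans h3)) (lt_irrefl b)
  · exact ⟨b, c, a, h3, h2, by ext t; simp [Finset.mem_insert]; tauto⟩
  · exact ⟨c, b, a, h3, h1, by ext t; simp [Finset.mem_insert]; tauto⟩

lemma csSet_surj (n : ℕ) (hn : 3 ≤ n) (s : Finset (Fin n)) (hs : s.card = 3) :
    ∃ v : CSVert n, csSet n hn v = s := by
  obtain ⟨a, b, c, hab, hbc, rfl⟩ := exists_sorted_triple hs
  have hab' : a.val < b.val := hab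
  have hbc' : b.val < c.val := hbc
  have hc := c.isLt
  refine ⟨⟨(b.val, a.val + 1, n - c.val),
    by refine ⟨?_, ?_, ?_, ?_, ?_, ?_⟩ <;> dsimp only <;> omega⟩, ?_⟩
  ext z
  rw [mem_csSet]
  simp only [Finset.mem_insert, Finset.mem_singleton, Fin.ext_iff]
  omega

lemma mem_or_eq {α : Type*} [DecidableEq α] {A B : Finset α} {x y z : α}
    (hs : symmDiff A B = {x, y}) (hz : z ∈ A) : z ∈ B ∨ z = x ∨ z = y := by
  by_cases h : z ∈ B
  · exact Or.inl h
  · have hm : z ∈ symmDiff A B := Finset.mem_symmDiff.mpr (Or.inl ⟨hz, h⟩)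
    rw [hs] at hm
    right; simpa using hm

private lemma dropY {a p q r x y : ℕ}
    (h : a = p ∨ a = q ∨ a = r ∨ a = x ∨ a = y) (hne : a ≠ y) :
    a = p ∨ a = q ∨ a = r ∨ a = x := by tauto

private lemma dropX {a p q r x y : ℕ}
    (h : a = p ∨ a = q ∨ a = r ∨ a = x ∨ a = y) (hne : a ≠ x) :
    a = p ∨ a = q ∨ a = r ∨ a = y := by tauto

set_option maxHeartbeats 1000000 in
private lemma key0 {a1 a2 a3 b1 b2 b3 x y : ℕ}
    (o1 : a1 < a2) (o2 : a2 < a3) (o3 : b1 < b2) (o4 : b2 < b3)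
    (hxy : x + 1 = y ∨ y + 1 = x)
    (hxa : x = a1 ∨ x = a2 ∨ x = a3) (hxb : x ≠ b1 ∧ x ≠ b2 ∧ x ≠ b3)
    (hyb : y = b1 ∨ y = b2 ∨ y = b3) (hya : y ≠ a1 ∧ y ≠ a2 ∧ y ≠ a3)
    (h1 : a1 = b1 ∨ a1 = b2 ∨ a1 = b3 ∨ a1 = x)
    (h2 : a2 = b1 ∨ a2 = b2 ∨ a2 = b3 ∨ a2 = x)
    (h3 : a3 = b1 ∨ a3 = b2 ∨ a3 = b3 ∨ a3 = x)
    (h4 : b1 = a1 ∨ b1 = a2 ∨ b1 = a3 ∨ b1 = y)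
    (h5 : b2 = a1 ∨ b2 = a2 ∨ b2 = a3 ∨ b2 = y)
    (h6 : b3 = a1 ∨ b3 = a2 ∨ b3 = a3 ∨ b3 = y) :
    (a2 = b2 ∧ a1 = b1 ∧ (a3 + 1 = b3 ∨ b3 + 1 = a3)) ∨
    (a2 = b2 ∧ a3 = b3 ∧ (a1 + 1 = b1 ∨ b1 + 1 = a1)) ∨
    (a1 = b1 ∧ a3 = b3 ∧ (a2 + 1 = b2 ∨ b2 + 1 = a2)) := by
  omega


private lemma drop4 {a p q r x : ℕ}
    (h : a = p ∨ a = q ∨ a = r ∨ a = x) (hne : a ≠ x) :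
    a = p ∨ a = q ∨ a = r := by tauto

private lemma sorted3 {a1 a2 a3 b1 b2 b3 : ℕ}
    (o1 : a1 < a2) (o2 : a2 < a3) (o3 : b1 < b2) (o4 : b2 < b3)
    (h4 : b1 = a1 ∨ b1 = a2 ∨ b1 = a3)
    (h5 : b2 = a1 ∨ b2 = a2 ∨ b2 = a3)
    (h6 : b3 = a1 ∨ b3 = a2 ∨ b3 = a3) :
    b1 = a1 ∧ b2 = a2 ∧ b3 = a3 := by omega

private lemma contra3 {p1 p2 p3 q1 q2 q3 x : ℕ}
    (e1 : q1 = p1) (e2 : q2 = p2) (e3 : q3 = p3)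
    (hx : x = p1 ∨ x = p2 ∨ x = p3) (hnx : ¬(x = q1 ∨ x = q2 ∨ x = q3)) : False := by
  subst e1 e2 e3; exact hnx hx

private lemma key {a1 a2 a3 b1 b2 b3 x y : ℕ}
    (o1 : a1 < a2) (o2 : a2 < a3) (o3 : b1 < b2) (o4 : b2 < b3)
    (hxy : x + 1 = y ∨ y + 1 = x)
    (h1 : a1 = b1 ∨ a1 = b2 ∨ a1 = b3 ∨ a1 = x ∨ a1 = y)
    (h2 : a2 = b1 ∨ a2 = b2 ∨ a2 = b3 ∨ a2 = x ∨ a2 = y)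
    (h3 : a3 = b1 ∨ a3 = b2 ∨ a3 = b3 ∨ a3 = x ∨ a3 = y)
    (h4 : b1 = a1 ∨ b1 = a2 ∨ b1 = a3 ∨ b1 = x ∨ b1 = y)
    (h5 : b2 = a1 ∨ b2 = a2 ∨ b2 = a3 ∨ b2 = x ∨ b2 = y)
    (h6 : b3 = a1 ∨ b3 = a2 ∨ b3 = a3 ∨ b3 = x ∨ b3 = y)
    (hx : ((x = a1 ∨ x = a2 ∨ x = a3) ∧ ¬(x = b1 ∨ x = b2 ∨ x = b3)) ∨
          ((x = b1 ∨ x = b2 ∨ x = b3) ∧ ¬(x = a1 ∨ x = a2 ∨ x = a3)))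
    (hy : ((y = a1 ∨ y = a2 ∨ y = a3) ∧ ¬(y = b1 ∨ y = b2 ∨ y = b3)) ∨
          ((y = b1 ∨ y = b2 ∨ y = b3) ∧ ¬(y = a1 ∨ y = a2 ∨ y = a3))) :
    (a2 = b2 ∧ a1 = b1 ∧ (a3 + 1 = b3 ∨ b3 + 1 = a3)) ∨
    (a2 = b2 ∧ a3 = b3 ∧ (a1 + 1 = b1 ∨ b1 + 1 = a1)) ∨
    (a1 = b1 ∧ a3 = b3 ∧ (a2 + 1 = b2 ∨ b2 + 1 = a2)) := by
  rcases hx with ⟨hxa, hxb⟩ | ⟨hxb, hxa⟩ <;> rcases hy with ⟨hya, hyb⟩ | ⟨hyb, hya⟩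
  · -- x, y both on the `a` side: impossible
    obtain ⟨e1, e2, e3⟩ := sorted3 o1 o2 o3 o4
      (drop4 (dropY h4 fun h => hyb (Or.inl h.symm)) fun h => hxb (Or.inl h.symm))
      (drop4 (dropY h5 fun h => hyb (Or.inr (Or.inl h.symm)))
        fun h => hxb (Or.inr (Or.inl h.symm)))
      (drop4 (dropY h6 fun h => hyb (Or.inr (Or.inr h.symm)))
        fun h => hxb (Or.inr (Or.inr h.symm)))
    exact (contra3 e1 e2 e3 hxa hxb).elim
  · -- main case : x on `a` side, y on `b` side
    have nx : x ≠ b1 ∧ x ≠ b2 ∧ x ≠ b3 :=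
      ⟨fun h => hxb (Or.inl h), fun h => hxb (Or.inr (Or.inl h)),
       fun h => hxb (Or.inr (Or.inr h))⟩
    have ny : y ≠ a1 ∧ y ≠ a2 ∧ y ≠ a3 :=
      ⟨fun h => hya (Or.inl h), fun h => hya (Or.inr (Or.inl h)),
       fun h => hya (Or.inr (Or.inr h))⟩
    exact key0 o1 o2 o3 o4 hxy hxa nx hyb ny
      (dropY h1 fun h => ny.1 h.symm) (dropY h2 fun h => ny.2.1 h.symm)
      (dropY h3 fun h => ny.2.2 h.symm)
      (dropX h4 fun h => nx.1 h.symm) (dropX h5 fun h => nx.2.1 h.symm)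
      (dropX h6 fun h => nx.2.2 h.symm)
  · -- mirrored main case : x on `b` side, y on `a` side
    have nx : x ≠ a1 ∧ x ≠ a2 ∧ x ≠ a3 :=
      ⟨fun h => hxa (Or.inl h), fun h => hxa (Or.inr (Or.inl h)),
       fun h => hxa (Or.inr (Or.inr h))⟩
    have ny : y ≠ b1 ∧ y ≠ b2 ∧ y ≠ b3 :=
      ⟨fun h => hyb (Or.inl h), fun h => hyb (Or.inr (Or.inl h)),
       fun h => hyb (Or.inr (Or.inr h))⟩
    have K := key0 o3 o4 o1 o2 hxy hxb nx hya ny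
      (dropY h4 fun h => ny.1 h.symm) (dropY h5 fun h => ny.2.1 h.symm)
      (dropY h6 fun h => ny.2.2 h.symm)
      (dropX h1 fun h => nx.1 h.symm) (dropX h2 fun h => nx.2.1 h.symm)
      (dropX h3 fun h => nx.2.2 h.symm)
    rcases K with ⟨e1, e2, e3⟩ | ⟨e1, e2, e3⟩ | ⟨e1, e2, e3⟩
    · exact Or.inl ⟨e1.symm, e2.symm, e3.symm⟩
    · exact Or.inr (Or.inl ⟨e1.symm, e2.symm, e3.symm⟩)
    · exact Or.inr (Or.inr ⟨e1.symm, e2.symm, e3.symm⟩)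
  · -- x, y both on the `b` side: impossible
    obtain ⟨e1, e2, e3⟩ := sorted3 o3 o4 o1 o2
      (drop4 (dropY h1 fun h => hya (Or.inl h.symm)) fun h => hxa (Or.inl h.symm))
      (drop4 (dropY h2 fun h => hya (Or.inr (Or.inl h.symm)))
        fun h => hxa (Or.inr (Or.inl h.symm)))
      (drop4 (dropY h3 fun h => hya (Or.inr (Or.inr h.symm)))
        fun h => hxa (Or.inr (Or.inr h.symm)))
    exact (contra3 e1 e2 e3 hxb hxa).elim

lemma adj_fwd (n : ℕ) (hn : 3 ≤ n) (v w : CSVert n) (x y : Fin n)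
    (hxy : (pathGraph n).Adj x y)
    (hs : symmDiff (csSet n hn v) (csSet n hn w) = {x, y}) :
    (CS n).Adj v w := by
  rw [pathGraph_adj] at hxy
  have hv := v.2; have hw := w.2
  have o1 : v.1.2.1 - 1 < v.1.1 := by omega
  have o2 : v.1.1 < n - v.1.2.2 := by omega
  have o3 : w.1.2.1 - 1 < w.1.1 := by omega
  have o4 : w.1.1 < n - w.1.2.2 := by omega
  have hs' : symmDiff (csSet n hn w) (csSet n hn v) = {x, y} := by rwa [symmDiff_comm]
  have b1 : v.1.2.1 - 1 < n := by omega
  have b2 : v.1.1 < n := by omega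
  have b3 : n - v.1.2.2 < n := by omega
  have b4 : w.1.2.1 - 1 < n := by omega
  have b5 : w.1.1 < n := by omega
  have b6 : n - w.1.2.2 < n := by omega
  have h1 := mem_or_eq hs ((mem_csSet n hn v ⟨_, b1⟩).mpr (Or.inl rfl))
  have h2 := mem_or_eq hs ((mem_csSet n hn v ⟨_, b2⟩).mpr (Or.inr (Or.inl rfl)))
  have h3 := mem_or_eq hs ((mem_csSet n hn v ⟨_, b3⟩).mpr (Or.inr (Or.inr rfl)))
  have h4 := mem_or_eq hs' ((mem_csSet n hn w ⟨_, b4⟩).mpr (Or.inl rfl))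
  have h5 := mem_or_eq hs' ((mem_csSet n hn w ⟨_, b5⟩).mpr (Or.inr (Or.inl rfl)))
  have h6 := mem_or_eq hs' ((mem_csSet n hn w ⟨_, b6⟩).mpr (Or.inr (Or.inr rfl)))
  have hx : x ∈ symmDiff (csSet n hn v) (csSet n hn w) := by
    rw [hs]; exact Finset.mem_insert_self x {y}
  have hy : y ∈ symmDiff (csSet n hn v) (csSet n hn w) := by
    rw [hs]; exact Finset.mem_insert_of_mem (Finset.mem_singleton_self y)
  rw [Finset.mem_symmDiff] at hx hy
  simp only [mem_csSet, Fin.ext_iff, Fin.val_mk, or_assoc] at h1 h2 h3 h4 h5 h6 hx hy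
  have K := key o1 o2 o3 o4 hxy h1 h2 h3 h4 h5 h6 hx hy
  show (v.1.1 = w.1.1 ∧ v.1.2.1 = w.1.2.1 ∧ (v.1.2.2 + 1 = w.1.2.2 ∨ w.1.2.2 + 1 = v.1.2.2)) ∨
    (v.1.1 = w.1.1 ∧ v.1.2.2 = w.1.2.2 ∧ (v.1.2.1 + 1 = w.1.2.1 ∨ w.1.2.1 + 1 = v.1.2.1)) ∨
    (v.1.2.1 = w.1.2.1 ∧ v.1.2.2 = w.1.2.2 ∧ (v.1.1 + 1 = w.1.1 ∨ w.1.1 + 1 = v.1.1))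
  clear h1 h2 h3 h4 h5 h6 hx hy hxy hs hs'
  omega

lemma adj_bwd (n : ℕ) (hn : 3 ≤ n) (v w : CSVert n) (h : (CS n).Adj v w) :
    ∃ x y, (pathGraph n).Adj x y ∧ symmDiff (csSet n hn v) (csSet n hn w) = {x, y} := by
  have hv := v.2; have hw := w.2
  rcases h with ⟨e1, e2, e3⟩ | ⟨e1, e2, e3⟩ | ⟨e1, e2, e3⟩
  · refine ⟨⟨n - v.1.2.2, by omega⟩, ⟨n - w.1.2.2, by omega⟩, ?_, ?_⟩
    · rw [pathGraph_adj]; simp only [Fin.val_mk]; omega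
    · ext z
      rw [Finset.mem_symmDiff]
      simp only [mem_csSet, Finset.mem_insert, Finset.mem_singleton, Fin.ext_iff, Fin.val_mk]
      omega
  · refine ⟨⟨v.1.2.1 - 1, by omega⟩, ⟨w.1.2.1 - 1, by omega⟩, ?_, ?_⟩
    · rw [pathGraph_adj]; simp only [Fin.val_mk]; omega
    · ext z
      rw [Finset.mem_symmDiff]
      simp only [mem_csSet, Finset.mem_insert, Finset.mem_singleton, Fin.ext_iff, Fin.val_mk]
      omega
  · refine ⟨⟨v.1.1, by omega⟩, ⟨w.1.1, by omega⟩, ?_, ?_⟩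
    · rw [pathGraph_adj]; simp only [Fin.val_mk]; omega
    · ext z
      rw [Finset.mem_symmDiff]
      simp only [mem_csSet, Finset.mem_insert, Finset.mem_singleton, Fin.ext_iff, Fin.val_mk]
      omega

end StaircaseAux

theorem stmt9 {n : ℕ} (hn : 3 ≤ n) :
    Nonempty (tokenGraph (pathGraph n) 3 ≃g CS n) := by
  have hbij : Function.Bijective
      (fun v : CSVert n => (⟨csSet n hn v, csSet_card n hn v⟩ :
        {s : Finset (Fin n) // s.card = 3})) := by
    constructor
    · intro v w h
      exact csSet_inj n hn v w (congrArg Subtype.val h)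
    · intro s
      obtain ⟨v, hv⟩ := csSet_surj n hn s.1 s.2
      exact ⟨v, Subtype.ext hv⟩
  refine ⟨SimpleGraph.Iso.symm ⟨Equiv.ofBijective _ hbij, @fun a b => ?_⟩⟩
  constructor
  · rintro ⟨x, y, hxy, hs⟩
    exact adj_fwd n hn a b x y hxy hs
  · intro h
    exact adj_bwd n hn a b h
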